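/- Let R be a commutative ring and let f be a formal power series over R with constant coefficient 0. Then for all natural numbers k and n, the n-th coefficient of f^k equals the sum, over all compositions c of n of length exactly k, of the product over the blocks cᵢ of c of the cᵢ-th coefficient of f. (This identity computes the coefficients of the k-th power G^k appearing in the Faà di Bruno formula.) -/

import Mathlib

open Finset

lemma comp_succ_sum {M : Type*} [AddCommMonoid M] (n k : ℕ) (G : List ℕ → M) :
    ∑ p ∈ (antidiagonal n).filter (fun p => p.1 ≠ 0),
      ∑ c ∈ Finset.univ.filter (fun c : Composition p.2 => c.length = k), G (p.1 :: c.blocks) =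
    ∑ c ∈ Finset.univ.filter (fun c : Composition n => c.length = k + 1), G c.blocks := by
  rw [Finset.sum_sigma']
  refine Finset.sum_bij'
    (fun a ha => ⟨a.1.1 :: a.2.blocks, by
        intro i hi
        simp only [Finset.mem_sigma, Finset.mem_filter, Finset.HasAntidiagonal.mem_antidiagonal,
          Finset.mem_univ, true_and] at ha
        rcases List.mem_cons.mp hi with rfl | hi
        · omega
        · exact a.2.blocks_pos hi, by
        simp only [Finset.mem_sigma, Finset.mem_filter, Finset.HasAntidiagonal.mem_antidiagonal,
          Finset.mem_univ, true_and] at ha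
        simp [a.2.blocks_sum]
        omega⟩)
    (fun c hc => ⟨(c.blocks.headI, n - c.blocks.headI),
        ⟨c.blocks.tail,
          (by intro i hi; exact c.blocks_pos (List.mem_of_mem_tail hi)), by
          simp only [Finset.mem_filter, Finset.mem_univ, true_and] at hc
          have hne : c.blocks ≠ [] := by
            intro h; rw [Composition.length, h] at hc; simp at hc
          have hs := c.blocks_sum
          cases h : c.blocks with
          | nil => exact absurd h hne
          | cons a l => rw [h] at hs; simp at hs ⊢; omega⟩⟩)
    ?_ ?_ ?_ ?_ ?_
  · rintro ⟨⟨p1, p2⟩, c⟩ ha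
    simp only [Finset.mem_sigma, Finset.mem_filter, Finset.HasAntidiagonal.mem_antidiagonal,
      Finset.mem_univ, true_and] at ha ⊢
    simp [Composition.length, ha.2]
  · rintro c hc
    simp only [Finset.mem_sigma, Finset.mem_filter, Finset.HasAntidiagonal.mem_antidiagonal,
      Finset.mem_univ, true_and] at hc ⊢
    have hne : c.blocks ≠ [] := by
      intro h; rw [Composition.length, h] at hc; simp at hc
    have hs := c.blocks_sum
    have hlen := hc
    refine ⟨⟨?_, ?_⟩, ?_⟩
    · cases h : c.blocks with
      | nil => exact absurd h hne
      | cons a l => rw [h] at hs; simp at hs ⊢; omega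
    · have : c.blocks.headI ∈ c.blocks := by
        cases h : c.blocks with
        | nil => exact absurd h hne
        | cons a l => simp [h]
      exact (c.blocks_pos this).ne'
    · simp only [Composition.length] at hlen ⊢
      rw [List.length_tail]
      omega
  · rintro ⟨⟨p1, p2⟩, c⟩ ha
    simp only [Finset.mem_sigma, Finset.mem_filter, Finset.HasAntidiagonal.mem_antidiagonal,
      Finset.mem_univ, true_and] at ha
    obtain ⟨⟨hsum, hp1⟩, hlen⟩ := ha
    have : p2 = n - p1 := by omega
    subst this
    rfl
  · rintro c hc
    simp only [Finset.mem_filter, Finset.mem_univ, true_and] at hc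
    have hne : c.blocks ≠ [] := by
      intro h; rw [Composition.length, h] at hc; simp at hc
    ext1
    show c.blocks.headI :: c.blocks.tail = c.blocks
    cases h : c.blocks with
    | nil => exact absurd h hne
    | cons a l => simp
  · rintro ⟨⟨p1, p2⟩, c⟩ ha
    rfl

/-- The `n`-th coefficient of the `k`-th power of a power series `f` with zero constant
coefficient is the sum over all compositions `c` of `n` of length exactly `k` of
`∏ᵢ f_{cᵢ}`. -/
theorem coeff_pow_eq_sum_compositions {R : Type*} [CommRing R] (f : PowerSeries R)
    (hf : PowerSeries.constantCoeff f = 0) (k n : ℕ) :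
    PowerSeries.coeff n (f ^ k) =
      ∑ c ∈ Finset.univ.filter (fun c : Composition n => c.length = k),
        (c.blocks.map fun i => PowerSeries.coeff i f).prod := by
  induction k generalizing n with
  | zero =>
    have hblocks : ∀ c : Composition n, c.length = 0 → c.blocks = [] ∧ n = 0 := by
      intro c hc
      have h : c.blocks = [] := List.length_eq_zero_iff.mp hc
      exact ⟨h, by have := c.blocks_sum; rw [h] at this; simpa using this.symm⟩
    rcases Nat.eq_zero_or_pos n with rfl | hn
    · rw [pow_zero]
      rw [Finset.sum_eq_single (Composition.ones 0)]
      · simp [Composition.ones]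
      · intro c _ hne
        exfalso
        apply hne
        have h : c.blocks = [] := by
          cases h : c.blocks with
          | nil => rfl
          | cons a l =>
            have := c.blocks_sum
            rw [h] at this
            have := c.blocks_pos (by rw [h]; exact List.mem_cons_self (a := a) (l := l))
            simp at *
            omega
        apply Composition.ext
        simp [h, Composition.ones]
      · intro h
        exfalso
        apply h
        simp [Composition.ones]
    · have : Finset.univ.filter (fun c : Composition n => c.length = 0) = ∅ := by
        rw [Finset.filter_eq_empty_iff]
        intro c _ hc
        exact hn.ne' (hblocks c hc).2
      rw [this, pow_zero, Finset.sum_empty, PowerSeries.coeff_one, if_neg hn.ne']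
  | succ k ih =>
    rw [pow_succ', PowerSeries.coeff_mul]
    rw [← Finset.sum_filter_of_ne (p := fun p : ℕ × ℕ => p.1 ≠ 0)
      (fun p _ hne h0 => hne (by rw [h0, PowerSeries.coeff_zero_eq_constantCoeff, hf, zero_mul]))]
    rw [← comp_succ_sum n k (fun l => (l.map fun i => PowerSeries.coeff i f).prod)]
    refine Finset.sum_congr rfl fun p _ => ?_
    rw [ih p.2, Finset.mul_sum]
    refine Finset.sum_congr rfl fun c _ => ?_
    simp [mul_comm]
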